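/- If U = {U_1,…,U_k} and V = {V_1,…,V_k} with V_i = X U_i Y for all i, where X ∈ ℝ^{m×m} and Y ∈ ℝ^{n×n}, then cap(V) = det(X)^{2/m} · det(Y)^{2/n} · cap(U). -/

import Mathlib

open Matrix BigOperators Pointwise

/-- Capacity of an operator given by matrices U_1, ..., U_k. -/
noncomputable def opCap {k m n : ℕ} (U : Fin k → Matrix (Fin m) (Fin n) ℝ) : ℝ :=
  sInf {c : ℝ | ∃ X : Matrix (Fin n) (Fin n) ℝ, X.PosDef ∧
    c = (m : ℝ) * (∑ i, U i * X * (U i)ᵀ).det ^ ((1 : ℝ) / (m : ℝ)) /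
        X.det ^ ((1 : ℝ) / (n : ℝ))}

/-- Size of an operator. -/
noncomputable def opSize {k m n : ℕ} (U : Fin k → Matrix (Fin m) (Fin n) ℝ) : ℝ :=
  (∑ i, U i * (U i)ᵀ).trace

/-- The measure Δ of distance to doubly balanced for an operator. -/
noncomputable def opDelta {k m n : ℕ} (U : Fin k → Matrix (Fin m) (Fin n) ℝ) : ℝ :=
  (1 / (m : ℝ)) *
    ((opSize U • (1 : Matrix (Fin m) (Fin m) ℝ) - (m : ℝ) • ∑ i, U i * (U i)ᵀ) ^ 2).trace +
  (1 / (n : ℝ)) *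
    ((opSize U • (1 : Matrix (Fin n) (Fin n) ℝ) - (n : ℝ) • ∑ i, (U i)ᵀ * U i) ^ 2).trace

/-- A sum of conjugations of a PSD matrix is PSD. -/
lemma aux_sum_posSemidef {k m n : ℕ} (U : Fin k → Matrix (Fin m) (Fin n) ℝ)
    {Z : Matrix (Fin n) (Fin n) ℝ} (hZ : Z.PosSemidef) :
    (∑ i, U i * Z * (U i)ᵀ).PosSemidef := by
  have h : ∀ i : Fin k, (U i * Z * (U i)ᵀ).PosSemidef := by
    intro i
    have := hZ.mul_mul_conjTranspose_same (U i)
    have ht : (U i)ᴴ = (U i)ᵀ := by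
      ext a b; simp [Matrix.conjTranspose_apply]
    rwa [ht] at this
  exact Finset.sum_induction (fun i => U i * Z * (U i)ᵀ) Matrix.PosSemidef
    (fun a b ha hb => ha.add hb) Matrix.PosSemidef.zero (fun i _ => h i)

/-- A PSD real matrix has nonnegative determinant. -/
lemma aux_psd_det_nonneg {n : ℕ} {A : Matrix (Fin n) (Fin n) ℝ} (hA : A.PosSemidef) :
    0 ≤ A.det := by
  exact hA.det_nonneg

/-- Conjugation of a PosDef matrix by an invertible matrix is PosDef. -/
lemma aux_posDef_conj {n : ℕ} {Z : Matrix (Fin n) (Fin n) ℝ} (hZ : Z.PosDef)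
    {Y : Matrix (Fin n) (Fin n) ℝ} (hY : IsUnit Y.det) : (Y * Z * Yᵀ).PosDef := by
  refine Matrix.PosDef.of_dotProduct_mulVec_pos ?_ ?_
  · have h1 := hZ.1
    unfold Matrix.IsHermitian at h1 ⊢
    rw [Matrix.conjTranspose_mul, Matrix.conjTranspose_mul, h1]
    have hys : Yᵀᴴ = Y := by
      ext i j; simp [Matrix.conjTranspose_apply]
    have hys2 : Yᴴ = Yᵀ := by
      ext i j; simp [Matrix.conjTranspose_apply]
    rw [hys, hys2, Matrix.mul_assoc]
  · intro x hx
    have hYt : IsUnit (Yᵀ).det := by rwa [Matrix.det_transpose]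
    have hinj : Function.Injective (Yᵀ).mulVec :=
      Matrix.mulVec_injective_iff_isUnit.mpr ((Matrix.isUnit_iff_isUnit_det _).mpr hYt)
    have hne : Yᵀ *ᵥ x ≠ 0 := by
      intro h
      exact hx (hinj (by simpa using h))
    have key := hZ.dotProduct_mulVec_pos hne
    have : star x ⬝ᵥ (Y * Z * Yᵀ) *ᵥ x = star (Yᵀ *ᵥ x) ⬝ᵥ Z *ᵥ (Yᵀ *ᵥ x) := by
      simp only [star_trivial, ← Matrix.mulVec_mulVec]
      rw [Matrix.dotProduct_mulVec x Y, ← Matrix.mulVec_transpose]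
    rw [this]
    exact key

/-- Change of operator capacity under scaling: if `Vᵢ = X Uᵢ Y` then
`cap(V) = det(X)^{2/m} det(Y)^{2/n} cap(U)`. -/
theorem opCap_scaling {k m n : ℕ} (hm : 0 < m) (hn : 0 < n)
    (U V : Fin k → Matrix (Fin m) (Fin n) ℝ)
    (X : Matrix (Fin m) (Fin m) ℝ) (Y : Matrix (Fin n) (Fin n) ℝ)
    (hX : IsUnit X.det) (hY : IsUnit Y.det)
    (hV : ∀ i, V i = X * U i * Y) :
    opCap V = (X.det ^ 2) ^ ((1 : ℝ) / (m : ℝ)) * (Y.det ^ 2) ^ ((1 : ℝ) / (n : ℝ)) * opCap U := by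
  have hXne : X.det ≠ 0 := hX.ne_zero
  have hYne : Y.det ≠ 0 := hY.ne_zero
  have hX2 : (0 : ℝ) < X.det ^ 2 := by positivity
  have hY2 : (0 : ℝ) < Y.det ^ 2 := by positivity
  set α : ℝ := (X.det ^ 2) ^ ((1 : ℝ) / (m : ℝ)) * (Y.det ^ 2) ^ ((1 : ℝ) / (n : ℝ)) with hα
  have hαpos : 0 < α := by positivity
  -- key pointwise identity
  have key : ∀ Z : Matrix (Fin n) (Fin n) ℝ, Z.PosDef →
      (m : ℝ) * (∑ i, V i * Z * (V i)ᵀ).det ^ ((1 : ℝ) / (m : ℝ)) /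
        Z.det ^ ((1 : ℝ) / (n : ℝ)) =
      α * ((m : ℝ) * (∑ i, U i * (Y * Z * Yᵀ) * (U i)ᵀ).det ^ ((1 : ℝ) / (m : ℝ)) /
        (Y * Z * Yᵀ).det ^ ((1 : ℝ) / (n : ℝ))) := by
    intro Z hZ
    have hsum : (∑ i, V i * Z * (V i)ᵀ) =
        X * (∑ i, U i * (Y * Z * Yᵀ) * (U i)ᵀ) * Xᵀ := by
      rw [Finset.mul_sum, Finset.sum_mul]
      apply Finset.sum_congr rfl
      intro i _
      rw [hV i]
      simp only [Matrix.transpose_mul, Matrix.mul_assoc]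
    have hdet1 : (∑ i, V i * Z * (V i)ᵀ).det =
        X.det ^ 2 * (∑ i, U i * (Y * Z * Yᵀ) * (U i)ᵀ).det := by
      rw [hsum, Matrix.det_mul, Matrix.det_mul, Matrix.det_transpose]
      ring
    have hdet2 : (Y * Z * Yᵀ).det = Y.det ^ 2 * Z.det := by
      rw [Matrix.det_mul, Matrix.det_mul, Matrix.det_transpose]; ring
    have hDnn : 0 ≤ (∑ i, U i * (Y * Z * Yᵀ) * (U i)ᵀ).det :=
      aux_psd_det_nonneg (aux_sum_posSemidef U (aux_posDef_conj hZ hY).posSemidef)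
    have hZd : 0 < Z.det := hZ.det_pos
    rw [hdet1, hdet2, Real.mul_rpow hX2.le hDnn, Real.mul_rpow hY2.le hZd.le]
    rw [hα]
    have h1 : (0:ℝ) < (Y.det ^ 2) ^ ((1:ℝ)/(n:ℝ)) := by positivity
    have h2 : (0:ℝ) < Z.det ^ ((1:ℝ)/(n:ℝ)) := by positivity
    field_simp
  -- set equality
  have hset : {c : ℝ | ∃ Z : Matrix (Fin n) (Fin n) ℝ, Z.PosDef ∧
      c = (m : ℝ) * (∑ i, V i * Z * (V i)ᵀ).det ^ ((1 : ℝ) / (m : ℝ)) /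
        Z.det ^ ((1 : ℝ) / (n : ℝ))} =
      α • {c : ℝ | ∃ Z : Matrix (Fin n) (Fin n) ℝ, Z.PosDef ∧
      c = (m : ℝ) * (∑ i, U i * Z * (U i)ᵀ).det ^ ((1 : ℝ) / (m : ℝ)) /
        Z.det ^ ((1 : ℝ) / (n : ℝ))} := by
    ext c
    constructor
    · rintro ⟨Z, hZ, rfl⟩
      refine ⟨(m : ℝ) * (∑ i, U i * (Y * Z * Yᵀ) * (U i)ᵀ).det ^ ((1 : ℝ) / (m : ℝ)) /
        (Y * Z * Yᵀ).det ^ ((1 : ℝ) / (n : ℝ)), ⟨Y * Z * Yᵀ, aux_posDef_conj hZ hY, rfl⟩, ?_⟩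
      exact (key Z hZ).symm
    · rintro ⟨c', ⟨Z', hZ', rfl⟩, rfl⟩
      -- take Z = Y⁻¹ * Z' * Y⁻¹ᵀ
      have hYu : IsUnit Y := (Matrix.isUnit_iff_isUnit_det Y).mpr hY
      have hYinv : IsUnit (Y⁻¹).det := by
        rw [Matrix.det_nonsing_inv, Ring.inverse_eq_inv']
        exact isUnit_iff_ne_zero.mpr (inv_ne_zero hYne)
      refine ⟨Y⁻¹ * Z' * Y⁻¹ᵀ, aux_posDef_conj hZ' hYinv, ?_⟩
      have hid : Y * (Y⁻¹ * Z' * Y⁻¹ᵀ) * Yᵀ = Z' := by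
        have h1 : Y * Y⁻¹ = 1 := Matrix.mul_nonsing_inv Y hY
        have h2 : Y⁻¹ᵀ * Yᵀ = 1 := by
          rw [← Matrix.transpose_mul, h1, Matrix.transpose_one]
        calc Y * (Y⁻¹ * Z' * Y⁻¹ᵀ) * Yᵀ
            = (Y * Y⁻¹) * Z' * (Y⁻¹ᵀ * Yᵀ) := by noncomm_ring
          _ = Z' := by rw [h1, h2, Matrix.one_mul, Matrix.mul_one]
      rw [key _ (aux_posDef_conj hZ' hYinv), hid]
      simp [smul_eq_mul]
  rw [opCap, opCap, hset, Real.sInf_smul_of_nonneg hαpos.le, smul_eq_mul]
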